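/- arXiv:1204.4828 — 9 statements merged into one kernel-verified Lean document; each statement's English description precedes it below -/
import Mathlib

section
/- Let (f,F) and (f',F') be twisted automorphisms of a bialgebra H over a field k. Then their composition (f∘f', (f⊗f)(F')·F) is again a twisted automorphism of H. -/
open scoped TensorProduct

noncomputable section

variable (K H : Type*) [Field K] [Ring H] [Bialgebra K H]

/-- The comultiplication of the bialgebra `H`. -/
def cm : H →ₗ[K] H ⊗[K] H := Coalgebra.comul

/-- The counit of the bialgebra `H`. -/
def cu : H →ₗ[K] K := Coalgebra.counit

/-- A twisted automorphism of the bialgebra `H` is a pair `(f, F)` where `f` is a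
`K`-algebra automorphism of `H` and `F ∈ H ⊗ H` is invertible, such that
`F·Δ(f(x)) = (f⊗f)(Δ(x))·F` for all `x`,
`(F⊗1)·(Δ⊗I)(F) = (1⊗F)·(I⊗Δ)(F)` (the 2-cocycle condition), and
`ε∘f = ε`, `(ε⊗I)(F) = 1 = (I⊗ε)(F)` (normalisation). -/
structure IsTwistedAut (f : H ≃ₐ[K] H) (F : H ⊗[K] H) : Prop where
  isUnit : IsUnit F
  conj : ∀ x : H,
    F * cm K H (f x) = Algebra.TensorProduct.map f.toAlgHom f.toAlgHom (cm K H x) * F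
  cocycle : TensorProduct.assoc K H H H ((F ⊗ₜ[K] (1 : H)) * LinearMap.rTensor H (cm K H) F)
      = ((1 : H) ⊗ₜ[K] F) * LinearMap.lTensor H (cm K H) F
  counit_comp : ∀ x : H, cu K H (f x) = cu K H x
  counit_left : TensorProduct.lid K H (LinearMap.rTensor H (cu K H) F) = 1
  counit_right : TensorProduct.rid K H (LinearMap.lTensor H (cu K H) F) = 1

/-! ### Auxiliary lemmas -/

lemma rT_cm_eq (z : H ⊗[K] H) : LinearMap.rTensor H (cm K H) z =
    (Algebra.TensorProduct.map (Bialgebra.comulAlgHom K H) (AlgHom.id K H)) z := by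
  have : LinearMap.rTensor H (cm K H) =
      (Algebra.TensorProduct.map (Bialgebra.comulAlgHom K H) (AlgHom.id K H)).toLinearMap := by
    apply TensorProduct.ext'
    intro x y
    simp [cm, Bialgebra.comulAlgHom]
  rw [this]; rfl

lemma lT_cm_eq (z : H ⊗[K] H) : LinearMap.lTensor H (cm K H) z =
    (Algebra.TensorProduct.map (AlgHom.id K H) (Bialgebra.comulAlgHom K H)) z := by
  have : LinearMap.lTensor H (cm K H) =
      (Algebra.TensorProduct.map (AlgHom.id K H) (Bialgebra.comulAlgHom K H)).toLinearMap := by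
    apply TensorProduct.ext'
    intro x y
    simp [cm, Bialgebra.comulAlgHom]
  rw [this]; rfl

lemma rT_cm_mul (a b : H ⊗[K] H) :
    LinearMap.rTensor H (cm K H) (a * b)
      = LinearMap.rTensor H (cm K H) a * LinearMap.rTensor H (cm K H) b := by
  rw [rT_cm_eq, rT_cm_eq, rT_cm_eq]; exact map_mul _ a b

lemma lT_cm_mul (a b : H ⊗[K] H) :
    LinearMap.lTensor H (cm K H) (a * b)
      = LinearMap.lTensor H (cm K H) a * LinearMap.lTensor H (cm K H) b := by
  rw [lT_cm_eq, lT_cm_eq, lT_cm_eq]; exact map_mul _ a b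

lemma assoc_mul (a b : (H ⊗[K] H) ⊗[K] H) :
    TensorProduct.assoc K H H H (a * b)
      = TensorProduct.assoc K H H H a * TensorProduct.assoc K H H H b := by
  have h : ∀ z : (H ⊗[K] H) ⊗[K] H,
      TensorProduct.assoc K H H H z = Algebra.TensorProduct.assoc K K K H H H z := fun _ => rfl
  rw [h, h, h]; exact map_mul _ a b

lemma assoc_T (f : H ≃ₐ[K] H) (z : (H ⊗[K] H) ⊗[K] H) :
    TensorProduct.assoc K H H H
      (Algebra.TensorProduct.map
        (Algebra.TensorProduct.map f.toAlgHom f.toAlgHom) f.toAlgHom z)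
    = Algebra.TensorProduct.map f.toAlgHom
        (Algebra.TensorProduct.map f.toAlgHom f.toAlgHom)
        (TensorProduct.assoc K H H H z) := by
  have h : (TensorProduct.assoc K H H H).toLinearMap ∘ₗ
      (Algebra.TensorProduct.map
        (Algebra.TensorProduct.map f.toAlgHom f.toAlgHom) f.toAlgHom).toLinearMap
      = (Algebra.TensorProduct.map f.toAlgHom
          (Algebra.TensorProduct.map f.toAlgHom f.toAlgHom)).toLinearMap ∘ₗ
        (TensorProduct.assoc K H H H).toLinearMap := by
    apply TensorProduct.ext_threefold
    intro x y w
    simp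
  exact LinearMap.congr_fun h z

lemma key_a (f : H ≃ₐ[K] H) (F : H ⊗[K] H)
    (hc : ∀ x : H,
      F * cm K H (f x) = Algebra.TensorProduct.map f.toAlgHom f.toAlgHom (cm K H x) * F)
    (y : H ⊗[K] H) :
    (F ⊗ₜ[K] (1 : H)) *
        LinearMap.rTensor H (cm K H) (Algebra.TensorProduct.map f.toAlgHom f.toAlgHom y)
      = Algebra.TensorProduct.map
          (Algebra.TensorProduct.map f.toAlgHom f.toAlgHom) f.toAlgHom
          (LinearMap.rTensor H (cm K H) y) * (F ⊗ₜ[K] (1 : H)) := by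
  induction y using TensorProduct.induction_on with
  | zero => simp
  | tmul a b =>
      simp only [Algebra.TensorProduct.map_tmul, LinearMap.rTensor_tmul,
        Algebra.TensorProduct.tmul_mul_tmul, one_mul, mul_one]
      congr 1
      exact hc a
  | add u v hu hv =>
      simp only [map_add, mul_add, add_mul] at hu hv ⊢
      rw [hu, hv]

lemma key_b (f : H ≃ₐ[K] H) (F : H ⊗[K] H)
    (hc : ∀ x : H,
      F * cm K H (f x) = Algebra.TensorProduct.map f.toAlgHom f.toAlgHom (cm K H x) * F)
    (y : H ⊗[K] H) :
    ((1 : H) ⊗ₜ[K] F) *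
        LinearMap.lTensor H (cm K H) (Algebra.TensorProduct.map f.toAlgHom f.toAlgHom y)
      = Algebra.TensorProduct.map f.toAlgHom
          (Algebra.TensorProduct.map f.toAlgHom f.toAlgHom)
          (LinearMap.lTensor H (cm K H) y) * ((1 : H) ⊗ₜ[K] F) := by
  induction y using TensorProduct.induction_on with
  | zero => simp
  | tmul a b =>
      simp only [Algebra.TensorProduct.map_tmul, LinearMap.lTensor_tmul,
        Algebra.TensorProduct.tmul_mul_tmul, one_mul, mul_one]
      congr 1
      exact hc b
  | add u v hu hv =>
      simp only [map_add, mul_add, add_mul] at hu hv ⊢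
      rw [hu, hv]

lemma map_trans_eq (f f' : H ≃ₐ[K] H) (z : H ⊗[K] H) :
    Algebra.TensorProduct.map (f'.trans f).toAlgHom (f'.trans f).toAlgHom z
      = Algebra.TensorProduct.map f.toAlgHom f.toAlgHom
          (Algebra.TensorProduct.map f'.toAlgHom f'.toAlgHom z) := by
  induction z using TensorProduct.induction_on with
  | zero => simp
  | tmul a b => simp
  | add u v hu hv => simp only [map_add, hu, hv]

lemma cuL_eq (z : H ⊗[K] H) :
    TensorProduct.lid K H (LinearMap.rTensor H (cu K H) z)
      = ((Algebra.TensorProduct.lid K H).toAlgHom.comp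
          (Algebra.TensorProduct.map (Bialgebra.counitAlgHom K H) (AlgHom.id K H))) z := by
  have h : (TensorProduct.lid K H).toLinearMap ∘ₗ LinearMap.rTensor H (cu K H)
      = ((Algebra.TensorProduct.lid K H).toAlgHom.comp
          (Algebra.TensorProduct.map (Bialgebra.counitAlgHom K H) (AlgHom.id K H))).toLinearMap := by
    apply TensorProduct.ext'
    intro x y
    simp [cu, Bialgebra.counitAlgHom]
  exact LinearMap.congr_fun h z

lemma cuR_eq (z : H ⊗[K] H) :
    TensorProduct.rid K H (LinearMap.lTensor H (cu K H) z)
      = ((Algebra.TensorProduct.rid K K H).toAlgHom.comp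
          (Algebra.TensorProduct.map (AlgHom.id K H) (Bialgebra.counitAlgHom K H))) z := by
  have h : (TensorProduct.rid K H).toLinearMap ∘ₗ LinearMap.lTensor H (cu K H)
      = ((Algebra.TensorProduct.rid K K H).toAlgHom.comp
          (Algebra.TensorProduct.map (AlgHom.id K H) (Bialgebra.counitAlgHom K H))).toLinearMap := by
    apply TensorProduct.ext'
    intro x y
    simp [cu, Bialgebra.counitAlgHom, Algebra.TensorProduct.rid_tmul]
  exact LinearMap.congr_fun h z

lemma cuL_mul (a b : H ⊗[K] H) :
    TensorProduct.lid K H (LinearMap.rTensor H (cu K H) (a * b))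
      = TensorProduct.lid K H (LinearMap.rTensor H (cu K H) a) *
        TensorProduct.lid K H (LinearMap.rTensor H (cu K H) b) := by
  rw [cuL_eq, cuL_eq, cuL_eq]; exact map_mul _ a b

lemma cuR_mul (a b : H ⊗[K] H) :
    TensorProduct.rid K H (LinearMap.lTensor H (cu K H) (a * b))
      = TensorProduct.rid K H (LinearMap.lTensor H (cu K H) a) *
        TensorProduct.rid K H (LinearMap.lTensor H (cu K H) b) := by
  rw [cuR_eq, cuR_eq, cuR_eq]; exact map_mul _ a b

lemma cuL_T (f : H ≃ₐ[K] H) (hf : ∀ x : H, cu K H (f x) = cu K H x) (z : H ⊗[K] H) :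
    TensorProduct.lid K H (LinearMap.rTensor H (cu K H)
        (Algebra.TensorProduct.map f.toAlgHom f.toAlgHom z))
      = f (TensorProduct.lid K H (LinearMap.rTensor H (cu K H) z)) := by
  induction z using TensorProduct.induction_on with
  | zero => simp
  | tmul a b => simp [hf a]
  | add u v hu hv => simp only [map_add, hu, hv]

lemma cuR_T (f : H ≃ₐ[K] H) (hf : ∀ x : H, cu K H (f x) = cu K H x) (z : H ⊗[K] H) :
    TensorProduct.rid K H (LinearMap.lTensor H (cu K H)
        (Algebra.TensorProduct.map f.toAlgHom f.toAlgHom z))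
      = f (TensorProduct.rid K H (LinearMap.lTensor H (cu K H) z)) := by
  induction z using TensorProduct.induction_on with
  | zero => simp
  | tmul a b => simp [hf b]
  | add u v hu hv => simp only [map_add, hu, hv]

/-- The composition `(f,F) ∘ (f',F') = (f∘f', (f⊗f)(F')·F)` of two
twisted automorphisms of a bialgebra `H` is again a twisted automorphism of `H`. -/
theorem isTwistedAut_comp (f f' : H ≃ₐ[K] H) (F F' : H ⊗[K] H)
    (h : IsTwistedAut K H f F) (h' : IsTwistedAut K H f' F') :
    IsTwistedAut K H (f'.trans f)
      (Algebra.TensorProduct.map f.toAlgHom f.toAlgHom F' * F) := by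
  set T := Algebra.TensorProduct.map f.toAlgHom f.toAlgHom with hT
  constructor
  · exact (h'.isUnit.map T).mul h.isUnit
  · intro x
    have hx : cm K H ((f'.trans f) x) = cm K H (f (f' x)) := rfl
    rw [hx, mul_assoc, h.conj, ← mul_assoc, ← map_mul, h'.conj, map_mul,
      ← map_trans_eq, mul_assoc]
  · -- cocycle
    set T1 := Algebra.TensorProduct.map
      (Algebra.TensorProduct.map f.toAlgHom f.toAlgHom) f.toAlgHom with hT1def
    set T2 := Algebra.TensorProduct.map f.toAlgHom
      (Algebra.TensorProduct.map f.toAlgHom f.toAlgHom) with hT2def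
    set a := T F' ⊗ₜ[K] (1 : H) with ha
    set b := F ⊗ₜ[K] (1 : H) with hb
    set c := LinearMap.rTensor H (cm K H) (T F') with hc
    set d := LinearMap.rTensor H (cm K H) F with hd
    have e1 : (T F' * F) ⊗ₜ[K] (1 : H) = a * b := by
      rw [ha, hb, Algebra.TensorProduct.tmul_mul_tmul, one_mul]
    have hT1a : T1 (F' ⊗ₜ[K] (1 : H)) = a := by
      rw [hT1def, ha, hT]; simp
    have key := key_a K H f F h.conj F'
    rw [← hT1def, ← hb, ← hc] at key
    have inner : (T F' * F) ⊗ₜ[K] (1 : H) * LinearMap.rTensor H (cm K H) (T F' * F)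
        = T1 ((F' ⊗ₜ[K] (1 : H)) * LinearMap.rTensor H (cm K H) F') * (b * d) := by
      calc (T F' * F) ⊗ₜ[K] (1 : H) * LinearMap.rTensor H (cm K H) (T F' * F)
          = (a * b) * (c * d) := by rw [e1, rT_cm_mul, ← hc, ← hd]
        _ = a * ((b * c) * d) := by rw [mul_assoc a b (c * d), ← mul_assoc b c d]
        _ = a * ((T1 (LinearMap.rTensor H (cm K H) F') * b) * d) := by rw [key]
        _ = (a * T1 (LinearMap.rTensor H (cm K H) F')) * (b * d) := by
            rw [mul_assoc (T1 (LinearMap.rTensor H (cm K H) F')) b d,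
              ← mul_assoc a (T1 (LinearMap.rTensor H (cm K H) F')) (b * d)]
        _ = T1 ((F' ⊗ₜ[K] (1 : H)) * LinearMap.rTensor H (cm K H) F') * (b * d) := by
            rw [map_mul, hT1a]
    rw [inner, assoc_mul, hT1def, assoc_T, ← hT2def, h'.cocycle, h.cocycle]
    -- right-hand side manipulation
    set a' := (1 : H) ⊗ₜ[K] T F' with ha'
    set b' := (1 : H) ⊗ₜ[K] F with hb'
    set c' := LinearMap.lTensor H (cm K H) (T F') with hc'
    set d' := LinearMap.lTensor H (cm K H) F with hd'
    have e2 : (1 : H) ⊗ₜ[K] (T F' * F) = a' * b' := by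
      rw [ha', hb', Algebra.TensorProduct.tmul_mul_tmul, one_mul]
    have hT2a : T2 ((1 : H) ⊗ₜ[K] F') = a' := by
      rw [hT2def, ha', hT]; simp
    have key' := key_b K H f F h.conj F'
    rw [← hT2def, ← hb', ← hc'] at key'
    calc T2 ((1 : H) ⊗ₜ[K] F' * LinearMap.lTensor H (cm K H) F') * (b' * d')
        = (a' * T2 (LinearMap.lTensor H (cm K H) F')) * (b' * d') := by
          rw [map_mul, hT2a]
      _ = a' * ((T2 (LinearMap.lTensor H (cm K H) F') * b') * d') := by
          rw [mul_assoc a' (T2 (LinearMap.lTensor H (cm K H) F')) (b' * d'),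
            mul_assoc (T2 (LinearMap.lTensor H (cm K H) F')) b' d']
      _ = a' * ((b' * c') * d') := by rw [key']
      _ = (a' * b') * (c' * d') := by rw [mul_assoc a' b' (c' * d'), ← mul_assoc b' c' d']
      _ = (1 : H) ⊗ₜ[K] (T F' * F) * LinearMap.lTensor H (cm K H) (T F' * F) := by
          rw [e2, lT_cm_mul, ← hc', ← hd']
  · intro x
    exact (h.counit_comp (f' x)).trans (h'.counit_comp x)
  · rw [cuL_mul, cuL_T K H f h.counit_comp, h'.counit_left, h.counit_left, map_one, one_mul]
  · rw [cuR_mul, cuR_T K H f h.counit_comp, h'.counit_right, h.counit_right, map_one, one_mul]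

end
end

section
/- Let H be a bialgebra over a field k. The set of twisted derivations of H is a Lie algebra under the bracket [(d,φ),(d',φ')] = ([d,d'], (d⊗I + I⊗d)(φ') − (d'⊗I + I⊗d')(φ) − [φ,φ']): if (d,φ) and (d',φ') are twisted derivations of H then so is their bracket, and this bracket is bilinear, alternating, and satisfies the Jacobi identity. -/
open scoped TensorProduct

noncomputable section

set_option synthInstance.maxHeartbeats 1000000
set_option maxHeartbeats 4000000

variable (K H : Type*) [Field K] [Ring H] [Bialgebra K H]

/-- A twisted derivation of the bialgebra `H` is a pair `(d, φ)` where `d` is a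
`K`-algebra derivation of `H` and `φ ∈ H ⊗ H`, such that
`(d⊗I + I⊗d)(Δ(x)) − Δ(d(x)) = [φ, Δ(x)]` for all `x`,
`1⊗φ + (I⊗Δ)(φ) = φ⊗1 + (Δ⊗I)(φ)` (co-Hochschild 2-cocycle condition), and
`ε∘d = 0`, `(ε⊗I)(φ) = 0 = (I⊗ε)(φ)`. -/
structure IsTwistedDerivation (d : H →ₗ[K] H) (φ : H ⊗[K] H) : Prop where
  leibniz : ∀ x y : H, d (x * y) = d x * y + x * d y
  conj : ∀ x : H,
    (LinearMap.rTensor H d + LinearMap.lTensor H d) (cm K H x) - cm K H (d x)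
      = φ * cm K H x - cm K H x * φ
  cocycle : (1 : H) ⊗ₜ[K] φ + LinearMap.lTensor H (cm K H) φ
      = TensorProduct.assoc K H H H (φ ⊗ₜ[K] (1 : H) + LinearMap.rTensor H (cm K H) φ)
  counit_comp : ∀ x : H, cu K H (d x) = 0
  counit_left : TensorProduct.lid K H (LinearMap.rTensor H (cu K H) φ) = 0
  counit_right : TensorProduct.rid K H (LinearMap.lTensor H (cu K H) φ) = 0

/-- The inner derivation `[a, −] : x ↦ ax − xa`. -/
def innerDer (a : H) : H →ₗ[K] H := LinearMap.mulLeft K a - LinearMap.mulRight K a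

/-- The coboundary twist `a⊗1 + 1⊗a − Δ(a)`. -/
def bdryTwist (a : H) : H ⊗[K] H := a ⊗ₜ[K] (1 : H) + (1 : H) ⊗ₜ[K] a - cm K H a


/-- The bracket `[(d,φ),(d',φ')] = ([d,d'], (d⊗I + I⊗d)(φ') − (d'⊗I + I⊗d')(φ) − [φ,φ'])`
on pairs of a linear endomorphism of `H` and an element of `H ⊗ H`. -/
def twBracket (p q : (H →ₗ[K] H) × (H ⊗[K] H)) : (H →ₗ[K] H) × (H ⊗[K] H) :=
  (p.1 ∘ₗ q.1 - q.1 ∘ₗ p.1,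
    (LinearMap.rTensor H p.1 + LinearMap.lTensor H p.1) q.2
      - (LinearMap.rTensor H q.1 + LinearMap.lTensor H q.1) p.2
      - (p.2 * q.2 - q.2 * p.2))

section TwAuxSec

namespace TwAux

open LinearMap

variable {K H}

/-- the two-slot operator `d⊗I + I⊗d` -/
def Dop (d : H →ₗ[K] H) : H ⊗[K] H →ₗ[K] H ⊗[K] H := rTensor H d + lTensor H d

lemma Dop_fold (f : H →ₗ[K] H) (z : H ⊗[K] H) :
    (rTensor H f + lTensor H f) z = Dop f z := rfl

lemma Dop_apply (d : H →ₗ[K] H) (z : H ⊗[K] H) :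
    Dop d z = rTensor H d z + lTensor H d z := rfl

lemma rT_lT_comm (f g : H →ₗ[K] H) (z : H ⊗[K] H) :
    rTensor H f (lTensor H g z) = lTensor H g (rTensor H f z) := by
  rw [← comp_apply, ← comp_apply, rTensor_comp_lTensor, lTensor_comp_rTensor]

lemma Dop_bracket (f g : H →ₗ[K] H) (z : H ⊗[K] H) :
    Dop (f ∘ₗ g - g ∘ₗ f) z = Dop f (Dop g z) - Dop g (Dop f z) := by
  simp only [Dop, LinearMap.add_apply, rTensor_sub, lTensor_sub, LinearMap.sub_apply, rTensor_comp, lTensor_comp,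
    comp_apply, map_add]
  rw [rT_lT_comm f g z, rT_lT_comm g f z]
  abel

lemma Dop_mul (d : H →ₗ[K] H) (hd : ∀ x y : H, d (x * y) = d x * y + x * d y)
    (u v : H ⊗[K] H) : Dop d (u * v) = Dop d u * v + u * Dop d v := by
  induction u using TensorProduct.induction_on with
  | zero => simp
  | tmul a b =>
    induction v using TensorProduct.induction_on with
    | zero => simp
    | tmul c e =>
      simp only [Algebra.TensorProduct.tmul_mul_tmul, Dop_apply, rTensor_tmul, lTensor_tmul,
        hd, TensorProduct.add_tmul, TensorProduct.tmul_add, add_mul, mul_add]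
      abel
    | add v₁ v₂ h1 h2 =>
      simp only [mul_add, map_add, h1, h2]
      abel
  | add u₁ u₂ h1 h2 =>
    simp only [add_mul, map_add, h1, h2]
    abel

lemma d_one (d : H →ₗ[K] H) (hd : ∀ x y : H, d (x * y) = d x * y + x * d y) : d 1 = 0 := by
  have := hd 1 1
  simp only [one_mul, mul_one] at this
  exact (left_eq_add).mp this

/-- three-slot operator on `H ⊗ (H ⊗ H)` -/
def Top (d : H →ₗ[K] H) : H ⊗[K] (H ⊗[K] H) →ₗ[K] H ⊗[K] (H ⊗[K] H) :=
  rTensor (H ⊗[K] H) d + lTensor H (Dop d)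

/-- three-slot operator on `(H ⊗ H) ⊗ H` -/
def Top' (d : H →ₗ[K] H) : (H ⊗[K] H) ⊗[K] H →ₗ[K] (H ⊗[K] H) ⊗[K] H :=
  rTensor H (Dop d) + lTensor (H ⊗[K] H) d

lemma lT_mulLeft (φ : H ⊗[K] H) (z : H ⊗[K] (H ⊗[K] H)) :
    lTensor H (mulLeft K φ) z = ((1 : H) ⊗ₜ[K] φ) * z := by
  induction z using TensorProduct.induction_on with
  | zero => simp
  | tmul a t => simp [Algebra.TensorProduct.tmul_mul_tmul]
  | add a b h1 h2 => simp only [map_add, mul_add, h1, h2]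

lemma lT_mulRight (φ : H ⊗[K] H) (z : H ⊗[K] (H ⊗[K] H)) :
    lTensor H (mulRight K φ) z = z * ((1 : H) ⊗ₜ[K] φ) := by
  induction z using TensorProduct.induction_on with
  | zero => simp
  | tmul a t => simp [Algebra.TensorProduct.tmul_mul_tmul]
  | add a b h1 h2 => simp only [map_add, add_mul, h1, h2]

lemma rT_mulLeft (φ : H ⊗[K] H) (z : (H ⊗[K] H) ⊗[K] H) :
    rTensor H (mulLeft K φ) z = (φ ⊗ₜ[K] (1 : H)) * z := by
  induction z using TensorProduct.induction_on with
  | zero => simp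
  | tmul t a => simp [Algebra.TensorProduct.tmul_mul_tmul]
  | add a b h1 h2 => simp only [map_add, mul_add, h1, h2]

lemma rT_mulRight (φ : H ⊗[K] H) (z : (H ⊗[K] H) ⊗[K] H) :
    rTensor H (mulRight K φ) z = z * (φ ⊗ₜ[K] (1 : H)) := by
  induction z using TensorProduct.induction_on with
  | zero => simp
  | tmul t a => simp [Algebra.TensorProduct.tmul_mul_tmul]
  | add a b h1 h2 => simp only [map_add, add_mul, h1, h2]

lemma one_tmul_mul (u v : H ⊗[K] H) :
    (1 : H) ⊗ₜ[K] (u * v) = ((1 : H) ⊗ₜ[K] u) * ((1 : H) ⊗ₜ[K] v) := by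
  rw [Algebra.TensorProduct.tmul_mul_tmul, one_mul]

lemma mul_tmul_one (u v : H ⊗[K] H) :
    (u * v) ⊗ₜ[K] (1 : H) = (u ⊗ₜ[K] (1 : H)) * (v ⊗ₜ[K] (1 : H)) := by
  rw [Algebra.TensorProduct.tmul_mul_tmul, one_mul]

lemma assoc_mul (u v : (H ⊗[K] H) ⊗[K] H) :
    TensorProduct.assoc K H H H (u * v)
      = TensorProduct.assoc K H H H u * TensorProduct.assoc K H H H v := by
  have h : ∀ w : (H ⊗[K] H) ⊗[K] H,
      TensorProduct.assoc K H H H w = Algebra.TensorProduct.assoc K K K H H H w := fun _ => rfl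
  rw [h, h, h, map_mul]

lemma assoc_Top' (d : H →ₗ[K] H) (z : (H ⊗[K] H) ⊗[K] H) :
    TensorProduct.assoc K H H H (Top' d z) = Top d (TensorProduct.assoc K H H H z) := by
  induction z using TensorProduct.induction_on with
  | zero => simp only [map_zero]
  | tmul y c =>
    induction y using TensorProduct.induction_on with
    | zero => simp only [TensorProduct.zero_tmul, map_zero]
    | tmul a b =>
      simp only [Top, Top', Dop_apply, LinearMap.add_apply, rTensor_tmul, lTensor_tmul,
        TensorProduct.add_tmul, TensorProduct.tmul_add, map_add, TensorProduct.assoc_tmul]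
      abel
    | add y₁ y₂ h1 h2 =>
      rw [TensorProduct.add_tmul]
      simp only [map_add, h1, h2]
  | add a b h1 h2 => simp only [map_add, h1, h2]

lemma Top_one_tmul (d : H →ₗ[K] H) (hd1 : d 1 = 0) (ψ : H ⊗[K] H) :
    (1 : H) ⊗ₜ[K] Dop d ψ = Top d ((1 : H) ⊗ₜ[K] ψ) := by
  simp [Top, hd1]

lemma Top'_tmul_one (d : H →ₗ[K] H) (hd1 : d 1 = 0) (ψ : H ⊗[K] H) :
    Dop d ψ ⊗ₜ[K] (1 : H) = Top' d (ψ ⊗ₜ[K] (1 : H)) := by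
  simp [Top', hd1]

lemma lT_cm_mul (u v : H ⊗[K] H) :
    lTensor H (cm K H) (u * v) = lTensor H (cm K H) u * lTensor H (cm K H) v := by
  induction u using TensorProduct.induction_on with
  | zero => simp
  | tmul a b =>
    induction v using TensorProduct.induction_on with
    | zero => simp
    | tmul c e =>
      simp [Algebra.TensorProduct.tmul_mul_tmul, cm, Bialgebra.comul_mul]
    | add v₁ v₂ h1 h2 => simp only [mul_add, map_add, h1, h2]
  | add u₁ u₂ h1 h2 => simp only [add_mul, map_add, h1, h2]

lemma rT_cm_mul (u v : H ⊗[K] H) :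
    rTensor H (cm K H) (u * v) = rTensor H (cm K H) u * rTensor H (cm K H) v := by
  induction u using TensorProduct.induction_on with
  | zero => simp
  | tmul a b =>
    induction v using TensorProduct.induction_on with
    | zero => simp
    | tmul c e =>
      simp [Algebra.TensorProduct.tmul_mul_tmul, cm, Bialgebra.comul_mul]
    | add v₁ v₂ h1 h2 => simp only [mul_add, map_add, h1, h2]
  | add u₁ u₂ h1 h2 => simp only [add_mul, map_add, h1, h2]

lemma lid_rT_cu_mul (u v : H ⊗[K] H) :
    TensorProduct.lid K H (rTensor H (cu K H) (u * v))
      = TensorProduct.lid K H (rTensor H (cu K H) u)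
        * TensorProduct.lid K H (rTensor H (cu K H) v) := by
  induction u using TensorProduct.induction_on with
  | zero => simp
  | tmul a b =>
    induction v using TensorProduct.induction_on with
    | zero => simp
    | tmul c e =>
      simp [Algebra.TensorProduct.tmul_mul_tmul, cu, Bialgebra.counit_mul, smul_smul,
        smul_mul_smul_comm, mul_comm]
    | add v₁ v₂ h1 h2 => simp only [mul_add, map_add, h1, h2]
  | add u₁ u₂ h1 h2 => simp only [add_mul, map_add, h1, h2]

lemma rid_lT_cu_mul (u v : H ⊗[K] H) :
    TensorProduct.rid K H (lTensor H (cu K H) (u * v))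
      = TensorProduct.rid K H (lTensor H (cu K H) u)
        * TensorProduct.rid K H (lTensor H (cu K H) v) := by
  induction u using TensorProduct.induction_on with
  | zero => simp
  | tmul a b =>
    induction v using TensorProduct.induction_on with
    | zero => simp
    | tmul c e =>
      simp [Algebra.TensorProduct.tmul_mul_tmul, cu, Bialgebra.counit_mul, smul_smul,
        smul_mul_smul_comm, mul_comm]
    | add v₁ v₂ h1 h2 => simp only [mul_add, map_add, h1, h2]
  | add u₁ u₂ h1 h2 => simp only [add_mul, map_add, h1, h2]

lemma lT_cm_Dop (d : H →ₗ[K] H) (φ : H ⊗[K] H)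
    (hconj : ∀ x : H, cm K H (d x) = Dop d (cm K H x) - (φ * cm K H x - cm K H x * φ))
    (ψ : H ⊗[K] H) :
    lTensor H (cm K H) (Dop d ψ)
      = Top d (lTensor H (cm K H) ψ)
        - (((1 : H) ⊗ₜ[K] φ) * lTensor H (cm K H) ψ
            - lTensor H (cm K H) ψ * ((1 : H) ⊗ₜ[K] φ)) := by
  have hmap : cm K H ∘ₗ d
      = Dop d ∘ₗ cm K H - (mulLeft K φ - mulRight K φ) ∘ₗ cm K H := by
    ext x
    simp only [comp_apply, LinearMap.sub_apply, mulLeft_apply, mulRight_apply, hconj x]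
  have h1 : lTensor H (cm K H) (rTensor H d ψ)
      = rTensor (H ⊗[K] H) d (lTensor H (cm K H) ψ) := by
    rw [← comp_apply, ← comp_apply, lTensor_comp_rTensor, rTensor_comp_lTensor]
  have h2 : lTensor H (cm K H) (lTensor H d ψ)
      = lTensor H (Dop d) (lTensor H (cm K H) ψ)
        - (((1 : H) ⊗ₜ[K] φ) * lTensor H (cm K H) ψ
            - lTensor H (cm K H) ψ * ((1 : H) ⊗ₜ[K] φ)) := by
    rw [← comp_apply, ← lTensor_comp, hmap, lTensor_sub, lTensor_comp, lTensor_comp,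
      lTensor_sub, LinearMap.sub_apply, comp_apply, comp_apply, LinearMap.sub_apply,
      lT_mulLeft, lT_mulRight]
  rw [Dop_apply, map_add, h1, h2, Top]
  simp only [LinearMap.add_apply]
  abel

lemma rT_cm_Dop (d : H →ₗ[K] H) (φ : H ⊗[K] H)
    (hconj : ∀ x : H, cm K H (d x) = Dop d (cm K H x) - (φ * cm K H x - cm K H x * φ))
    (ψ : H ⊗[K] H) :
    rTensor H (cm K H) (Dop d ψ)
      = Top' d (rTensor H (cm K H) ψ)
        - ((φ ⊗ₜ[K] (1 : H)) * rTensor H (cm K H) ψ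
            - rTensor H (cm K H) ψ * (φ ⊗ₜ[K] (1 : H))) := by
  have hmap : cm K H ∘ₗ d
      = Dop d ∘ₗ cm K H - (mulLeft K φ - mulRight K φ) ∘ₗ cm K H := by
    ext x
    simp only [comp_apply, LinearMap.sub_apply, mulLeft_apply, mulRight_apply, hconj x]
  have h1 : rTensor H (cm K H) (lTensor H d ψ)
      = lTensor (H ⊗[K] H) d (rTensor H (cm K H) ψ) := by
    rw [← comp_apply, ← comp_apply, rTensor_comp_lTensor, lTensor_comp_rTensor]
  have h2 : rTensor H (cm K H) (rTensor H d ψ)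
      = rTensor H (Dop d) (rTensor H (cm K H) ψ)
        - ((φ ⊗ₜ[K] (1 : H)) * rTensor H (cm K H) ψ
            - rTensor H (cm K H) ψ * (φ ⊗ₜ[K] (1 : H))) := by
    rw [← comp_apply, ← rTensor_comp, hmap, rTensor_sub, rTensor_comp, rTensor_comp,
      rTensor_sub, LinearMap.sub_apply, comp_apply, comp_apply, LinearMap.sub_apply,
      rT_mulLeft, rT_mulRight]
  rw [Dop_apply, map_add, h2, h1, Top']
  simp only [LinearMap.add_apply]
  abel

lemma lid_lT (d : H →ₗ[K] H) (z : K ⊗[K] H) :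
    TensorProduct.lid K H (lTensor K d z) = d (TensorProduct.lid K H z) := by
  induction z using TensorProduct.induction_on with
  | zero => simp
  | tmul c h => simp
  | add a b h1 h2 => simp only [map_add, h1, h2]

lemma rid_rT (d : H →ₗ[K] H) (z : H ⊗[K] K) :
    TensorProduct.rid K H (rTensor K d z) = d (TensorProduct.rid K H z) := by
  induction z using TensorProduct.induction_on with
  | zero => simp
  | tmul h c => simp
  | add a b h1 h2 => simp only [map_add, h1, h2]

lemma lid_rT_cu_Dop (d : H →ₗ[K] H) (hcu : ∀ x : H, cu K H (d x) = 0)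
    (ψ : H ⊗[K] H) (hψ : TensorProduct.lid K H (rTensor H (cu K H) ψ) = 0) :
    TensorProduct.lid K H (rTensor H (cu K H) (Dop d ψ)) = 0 := by
  have hc : (cu K H) ∘ₗ d = 0 := by ext x; simp [hcu x]
  have h1 : rTensor H (cu K H) (rTensor H d ψ) = 0 := by
    rw [← comp_apply, ← rTensor_comp, hc, rTensor_zero, LinearMap.zero_apply]
  have h2 : rTensor H (cu K H) (lTensor H d ψ) = lTensor K d (rTensor H (cu K H) ψ) := by
    rw [← comp_apply, ← comp_apply, rTensor_comp_lTensor, lTensor_comp_rTensor]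
  rw [Dop_apply, map_add, h1, h2, zero_add, lid_lT, hψ, map_zero]

lemma rid_lT_cu_Dop (d : H →ₗ[K] H) (hcu : ∀ x : H, cu K H (d x) = 0)
    (ψ : H ⊗[K] H) (hψ : TensorProduct.rid K H (lTensor H (cu K H) ψ) = 0) :
    TensorProduct.rid K H (lTensor H (cu K H) (Dop d ψ)) = 0 := by
  have hc : (cu K H) ∘ₗ d = 0 := by ext x; simp [hcu x]
  have h1 : lTensor H (cu K H) (lTensor H d ψ) = 0 := by
    rw [← comp_apply, ← lTensor_comp, hc, lTensor_zero, LinearMap.zero_apply]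
  have h2 : lTensor H (cu K H) (rTensor H d ψ) = rTensor K d (lTensor H (cu K H) ψ) := by
    rw [← comp_apply, ← comp_apply, lTensor_comp_rTensor, rTensor_comp_lTensor]
  rw [Dop_apply, map_add, h2, h1, add_zero, rid_rT, hψ, map_zero]

end TwAux

end TwAuxSec

open TwAux LinearMap in
/-- The twisted derivations of a bialgebra `H` form a Lie algebra under
`[(d,φ),(d',φ')] = ([d,d'], (d⊗I + I⊗d)(φ') − (d'⊗I + I⊗d')(φ) − [φ,φ'])`:
the bracket of two twisted derivations is a twisted derivation, and the bracket is
bilinear, alternating and satisfies the Jacobi identity. -/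
theorem twistedDerivations_lieAlgebra :
    (∀ p q : (H →ₗ[K] H) × (H ⊗[K] H), IsTwistedDerivation K H p.1 p.2 →
      IsTwistedDerivation K H q.1 q.2 →
      IsTwistedDerivation K H (twBracket K H p q).1 (twBracket K H p q).2) ∧
    (∀ (c : K) (p p' q : (H →ₗ[K] H) × (H ⊗[K] H)),
      twBracket K H (c • p + p') q = c • twBracket K H p q + twBracket K H p' q) ∧
    (∀ (c : K) (p q q' : (H →ₗ[K] H) × (H ⊗[K] H)),
      twBracket K H p (c • q + q') = c • twBracket K H p q + twBracket K H p q') ∧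
    (∀ p : (H →ₗ[K] H) × (H ⊗[K] H), twBracket K H p p = 0) ∧
    (∀ p q r : (H →ₗ[K] H) × (H ⊗[K] H), IsTwistedDerivation K H p.1 p.2 →
      IsTwistedDerivation K H q.1 q.2 → IsTwistedDerivation K H r.1 r.2 →
      twBracket K H p (twBracket K H q r) + twBracket K H q (twBracket K H r p)
        + twBracket K H r (twBracket K H p q) = 0) := by
  refine ⟨?_, ?_, ?_, ?_, ?_⟩
  · -- closure
    rintro ⟨d, φ⟩ ⟨d', φ'⟩ hp hq
    replace hp : IsTwistedDerivation K H d φ := hp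
    replace hq : IsTwistedDerivation K H d' φ' := hq
    show IsTwistedDerivation K H (d ∘ₗ d' - d' ∘ₗ d)
      (Dop d φ' - Dop d' φ - (φ * φ' - φ' * φ))
    have hc1 : ∀ y : H, Dop d (cm K H y)
        = cm K H (d y) + (φ * cm K H y - cm K H y * φ) := by
      intro y
      have h := hp.conj y
      simp only [Dop_fold] at h
      rw [← h]; abel
    have hc2 : ∀ y : H, Dop d' (cm K H y)
        = cm K H (d' y) + (φ' * cm K H y - cm K H y * φ') := by
      intro y
      have h := hq.conj y
      simp only [Dop_fold] at h
      rw [← h]; abel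
    have hconj1 : ∀ y : H, cm K H (d y)
        = Dop d (cm K H y) - (φ * cm K H y - cm K H y * φ) := by
      intro y; rw [hc1 y]; abel
    have hconj2 : ∀ y : H, cm K H (d' y)
        = Dop d' (cm K H y) - (φ' * cm K H y - cm K H y * φ') := by
      intro y; rw [hc2 y]; abel
    have hd1 : d 1 = 0 := d_one d hp.leibniz
    have hd'1 : d' 1 = 0 := d_one d' hq.leibniz
    refine ⟨?_, ?_, ?_, ?_, ?_, ?_⟩
    · -- leibniz
      intro x y
      simp only [LinearMap.sub_apply, comp_apply, hp.leibniz, hq.leibniz, map_add, sub_mul, mul_sub]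
      abel
    · -- conj
      intro x
      simp only [Dop_fold, Dop_bracket, LinearMap.sub_apply, comp_apply, map_sub, map_add,
        hc1, hc2, Dop_mul d hp.leibniz, Dop_mul d' hq.leibniz]
      noncomm_ring
    · -- cocycle
      have k1 : ∀ ψ : H ⊗[K] H, (1 : H) ⊗ₜ[K] Dop d ψ = Top d ((1 : H) ⊗ₜ[K] ψ) :=
        Top_one_tmul d hd1
      have k2 : ∀ ψ : H ⊗[K] H, (1 : H) ⊗ₜ[K] Dop d' ψ = Top d' ((1 : H) ⊗ₜ[K] ψ) :=
        Top_one_tmul d' hd'1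
      have k3 : ∀ ψ : H ⊗[K] H, Dop d ψ ⊗ₜ[K] (1 : H) = Top' d (ψ ⊗ₜ[K] (1 : H)) :=
        Top'_tmul_one d hd1
      have k4 : ∀ ψ : H ⊗[K] H, Dop d' ψ ⊗ₜ[K] (1 : H) = Top' d' (ψ ⊗ₜ[K] (1 : H)) :=
        Top'_tmul_one d' hd'1
      have hqc : (1 : H) ⊗ₜ[K] φ' + lTensor H (cm K H) φ'
          = TensorProduct.assoc K H H H (φ' ⊗ₜ[K] (1 : H))
            + TensorProduct.assoc K H H H (rTensor H (cm K H) φ') := by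
        have h := hq.cocycle; rwa [map_add] at h
      have hpc : (1 : H) ⊗ₜ[K] φ + lTensor H (cm K H) φ
          = TensorProduct.assoc K H H H (φ ⊗ₜ[K] (1 : H))
            + TensorProduct.assoc K H H H (rTensor H (cm K H) φ) := by
        have h := hp.cocycle; rwa [map_add] at h
      have hTq : Top d ((1 : H) ⊗ₜ[K] φ') + Top d (lTensor H (cm K H) φ')
          = Top d (TensorProduct.assoc K H H H (φ' ⊗ₜ[K] (1 : H)))
            + Top d (TensorProduct.assoc K H H H (rTensor H (cm K H) φ')) := by
        rw [← map_add, ← map_add, hqc]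
      have hTp : Top d' ((1 : H) ⊗ₜ[K] φ) + Top d' (lTensor H (cm K H) φ)
          = Top d' (TensorProduct.assoc K H H H (φ ⊗ₜ[K] (1 : H)))
            + Top d' (TensorProduct.assoc K H H H (rTensor H (cm K H) φ)) := by
        rw [← map_add, ← map_add, hpc]
      have h1 : ((1 : H) ⊗ₜ[K] φ + lTensor H (cm K H) φ)
            * ((1 : H) ⊗ₜ[K] φ' + lTensor H (cm K H) φ')
          = (TensorProduct.assoc K H H H (φ ⊗ₜ[K] (1 : H))
              + TensorProduct.assoc K H H H (rTensor H (cm K H) φ))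
            * (TensorProduct.assoc K H H H (φ' ⊗ₜ[K] (1 : H))
              + TensorProduct.assoc K H H H (rTensor H (cm K H) φ')) := by
        rw [hpc, hqc]
      have h2 : ((1 : H) ⊗ₜ[K] φ' + lTensor H (cm K H) φ')
            * ((1 : H) ⊗ₜ[K] φ + lTensor H (cm K H) φ)
          = (TensorProduct.assoc K H H H (φ' ⊗ₜ[K] (1 : H))
              + TensorProduct.assoc K H H H (rTensor H (cm K H) φ'))
            * (TensorProduct.assoc K H H H (φ ⊗ₜ[K] (1 : H))
              + TensorProduct.assoc K H H H (rTensor H (cm K H) φ)) := by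
        rw [hpc, hqc]
      simp only [TensorProduct.tmul_sub, TensorProduct.sub_tmul, map_sub, map_add,
        one_tmul_mul, mul_tmul_one, lT_cm_mul, rT_cm_mul, k1, k2, k3, k4,
        lT_cm_Dop d φ hconj1, lT_cm_Dop d' φ' hconj2,
        rT_cm_Dop d φ hconj1, rT_cm_Dop d' φ' hconj2,
        assoc_Top', assoc_mul]
      linear_combination (norm := noncomm_ring) hTq - hTp - h1 + h2
    · -- counit_comp
      intro x
      simp only [LinearMap.sub_apply, comp_apply, map_sub, hp.counit_comp, hq.counit_comp, sub_zero]
    · -- counit_left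
      have t1 := lid_rT_cu_Dop d hp.counit_comp φ' hq.counit_left
      have t2 := lid_rT_cu_Dop d' hq.counit_comp φ hp.counit_left
      have t3 : TensorProduct.lid K H (rTensor H (cu K H) (φ * φ')) = 0 := by
        rw [lid_rT_cu_mul, hp.counit_left, zero_mul]
      have t4 : TensorProduct.lid K H (rTensor H (cu K H) (φ' * φ)) = 0 := by
        rw [lid_rT_cu_mul, hq.counit_left, zero_mul]
      simp only [map_sub, t1, t2, t3, t4, sub_zero, zero_sub, neg_zero, sub_self]
    · -- counit_right
      have t1 := rid_lT_cu_Dop d hp.counit_comp φ' hq.counit_right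
      have t2 := rid_lT_cu_Dop d' hq.counit_comp φ hp.counit_right
      have t3 : TensorProduct.rid K H (lTensor H (cu K H) (φ * φ')) = 0 := by
        rw [rid_lT_cu_mul, hp.counit_right, zero_mul]
      have t4 : TensorProduct.rid K H (lTensor H (cu K H) (φ' * φ)) = 0 := by
        rw [rid_lT_cu_mul, hq.counit_right, zero_mul]
      simp only [map_sub, t1, t2, t3, t4, sub_zero, zero_sub, neg_zero, sub_self]
  · -- left bilinearity
    intro c p p' q
    simp only [twBracket, Prod.fst_add, Prod.snd_add, Prod.smul_fst, Prod.smul_snd,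
      Prod.smul_mk, Prod.mk_add_mk, Prod.mk.injEq]
    constructor
    · simp only [add_comp, comp_add, smul_comp, comp_smul, smul_sub]
      abel
    · simp only [rTensor_add, rTensor_smul, lTensor_add, lTensor_smul, LinearMap.add_apply,
        LinearMap.smul_apply, map_add, map_smul, add_mul, mul_add, smul_mul_assoc, mul_smul_comm,
        smul_sub, smul_add]
      abel
  · -- right bilinearity
    intro c p q q'
    simp only [twBracket, Prod.fst_add, Prod.snd_add, Prod.smul_fst, Prod.smul_snd,
      Prod.smul_mk, Prod.mk_add_mk, Prod.mk.injEq]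
    constructor
    · simp only [add_comp, comp_add, smul_comp, comp_smul, smul_sub]
      abel
    · simp only [rTensor_add, rTensor_smul, lTensor_add, lTensor_smul, LinearMap.add_apply,
        LinearMap.smul_apply, map_add, map_smul, add_mul, mul_add, smul_mul_assoc, mul_smul_comm,
        smul_sub, smul_add]
      abel
  · -- alternating
    intro p
    simp [twBracket, sub_self, Prod.mk_eq_zero]
  · -- Jacobi
    rintro ⟨p1, p2⟩ ⟨q1, q2⟩ ⟨r1, r2⟩ hp hq hr
    replace hp : IsTwistedDerivation K H p1 p2 := hp
    replace hq : IsTwistedDerivation K H q1 q2 := hq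
    replace hr : IsTwistedDerivation K H r1 r2 := hr
    simp only [twBracket, Prod.mk_add_mk, Prod.mk_eq_zero]
    constructor
    · simp only [comp_sub, sub_comp, comp_assoc]
      abel
    · simp only [Dop_fold, Dop_bracket, map_sub,
        Dop_mul p1 hp.leibniz, Dop_mul q1 hq.leibniz, Dop_mul r1 hr.leibniz]
      noncomm_ring

end
end

section
/- Let H be a bialgebra over a field k. For all a, b ∈ H with ε(a) = ε(b) = 0 one has ∂(ab − ba) = [∂(a), ∂(b)], where ∂(a) = ([a,−], a⊗1 + 1⊗a − Δ(a)) and the bracket of pairs is [(d,φ),(d',φ')] = ([d,d'], (d⊗I + I⊗d)(φ') − (d'⊗I + I⊗d')(φ) − [φ,φ']). In other words, ∂ : ker ε → Der_tw(H) is a homomorphism of Lie algebras. -/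
open scoped TensorProduct

noncomputable section

variable (K H : Type*) [Field K] [Ring H] [Bialgebra K H]

/-- The inner twisted derivation `∂(a) = ([a,−], a⊗1 + 1⊗a − Δ(a))`, as a pair. -/
def bdryPair (a : H) : (H →ₗ[K] H) × (H ⊗[K] H) := (innerDer K H a, bdryTwist K H a)

lemma key (a : H) (ξ : H ⊗[K] H) :
    (LinearMap.rTensor H (innerDer K H a) + LinearMap.lTensor H (innerDer K H a)) ξ
      = (a ⊗ₜ[K] (1 : H) + (1 : H) ⊗ₜ[K] a) * ξ - ξ * (a ⊗ₜ[K] (1 : H) + (1 : H) ⊗ₜ[K] a) := by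
  induction ξ using TensorProduct.induction_on with
  | zero => simp
  | tmul x y =>
      simp [innerDer, Algebra.TensorProduct.tmul_mul_tmul, add_mul, mul_add,
        TensorProduct.sub_tmul, TensorProduct.tmul_sub]
      abel
  | add x y hx hy =>
      simp only [map_add, hx, hy, mul_add, add_mul]
      abel

lemma cm_mul (x y : H) : cm K H (x * y) = cm K H x * cm K H y := Bialgebra.comul_mul x y

/-- For `a, b ∈ H` with `ε(a) = ε(b) = 0` one has
`∂(ab − ba) = [∂(a), ∂(b)]`; i.e. `∂ : ker ε → Der_tw(H)` is a Lie algebra homomorphism. -/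
theorem bdryPair_lieHom (a b : H) (ha : cu K H a = 0) (hb : cu K H b = 0) :
    bdryPair K H (a * b - b * a) = twBracket K H (bdryPair K H a) (bdryPair K H b) := by
  unfold bdryPair twBracket
  refine Prod.ext ?_ ?_
  · ext x
    simp [innerDer, mul_sub, sub_mul, mul_assoc]
    abel
  · show bdryTwist K H (a * b - b * a) = _
    rw [key, key]
    unfold bdryTwist
    rw [map_sub, cm_mul, cm_mul]
    simp only [map_sub, map_mul, TensorProduct.sub_tmul, TensorProduct.tmul_sub,
      mul_sub, sub_mul, mul_add, add_mul, Algebra.TensorProduct.tmul_mul_tmul,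
      one_mul, mul_one]
    abel

end
end

section
/- Let H be a bialgebra over a field k, (d,φ) a twisted derivation of H, and a ∈ H with ε(a) = 0. Then [(d,φ), ∂(a)] = ∂(d(a)), where ∂(a) = ([a,−], a⊗1 + 1⊗a − Δ(a)) and the bracket of pairs is [(d,φ),(d',φ')] = ([d,d'], (d⊗I + I⊗d)(φ') − (d'⊗I + I⊗d')(φ) − [φ,φ']). (This is the equivariance axiom making ∂ : ker ε → Der_tw(H) a crossed module of Lie algebras.) -/
open scoped TensorProduct

noncomputable section

variable (K H : Type*) [Field K] [Ring H] [Bialgebra K H]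

lemma rT_inner (a : H) (ψ : H ⊗[K] H) :
    LinearMap.rTensor H (innerDer K H a) ψ = (a ⊗ₜ[K] (1:H)) * ψ - ψ * (a ⊗ₜ[K] (1:H)) := by
  induction ψ using TensorProduct.induction_on with
  | zero => simp
  | tmul x y => simp [innerDer, Algebra.TensorProduct.tmul_mul_tmul, TensorProduct.sub_tmul]
  | add x y hx hy => simp only [map_add, hx, hy]; noncomm_ring

lemma lT_inner (a : H) (ψ : H ⊗[K] H) :
    LinearMap.lTensor H (innerDer K H a) ψ = ((1:H) ⊗ₜ[K] a) * ψ - ψ * ((1:H) ⊗ₜ[K] a) := by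
  induction ψ using TensorProduct.induction_on with
  | zero => simp
  | tmul x y => simp [innerDer, Algebra.TensorProduct.tmul_mul_tmul, TensorProduct.tmul_sub]
  | add x y hx hy => simp only [map_add, hx, hy]; noncomm_ring

/-- For a twisted derivation `(d,φ)` of `H` and `a ∈ H` with `ε(a) = 0`
one has `[(d,φ), ∂(a)] = ∂(d(a))`: the equivariance axiom making
`∂ : ker ε → Der_tw(H)` a crossed module of Lie algebras. -/
theorem twBracket_bdryPair (d : H →ₗ[K] H) (φ : H ⊗[K] H)
    (h : IsTwistedDerivation K H d φ) (a : H) (ha : cu K H a = 0) :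
    twBracket K H (d, φ) (bdryPair K H a) = bdryPair K H (d a) := by
  have hd1 : d 1 = 0 := by
    have := h.leibniz 1 1
    simp only [mul_one, one_mul] at this
    exact left_eq_add.mp this
  have key := h.conj a
  refine Prod.ext ?_ ?_
  · ext x
    simp only [twBracket, bdryPair, innerDer, LinearMap.sub_apply, LinearMap.comp_apply,
      LinearMap.mulLeft_apply, LinearMap.mulRight_apply, map_sub]
    rw [h.leibniz a x, h.leibniz x a]
    noncomm_ring
  · show (LinearMap.rTensor H d + LinearMap.lTensor H d) (bdryTwist K H a)
      - (LinearMap.rTensor H (innerDer K H a) + LinearMap.lTensor H (innerDer K H a)) φ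
      - (φ * bdryTwist K H a - bdryTwist K H a * φ) = bdryTwist K H (d a)
    simp only [LinearMap.add_apply, bdryTwist, map_sub, map_add,
      LinearMap.rTensor_tmul, LinearMap.lTensor_tmul, LinearMap.id_coe, id_eq, hd1,
      TensorProduct.zero_tmul, TensorProduct.tmul_zero, rT_inner, lT_inner]
    have key2 : LinearMap.rTensor H d (cm K H a) + LinearMap.lTensor H d (cm K H a)
        = cm K H (d a) + (φ * cm K H a - cm K H a * φ) := by
      rw [← key]; simp only [LinearMap.add_apply]; noncomm_ring
    rw [key2]
    noncomm_ring
end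
end

section
/- Let H be a bialgebra over a field k, let (f,F) and (g,G) be twisted automorphisms of H, and let a ∈ H be an invertible gauge transformation from (f,F) to (g,G), i.e. a·f(x) = g(x)·a for all x ∈ H and G·Δ(a) = (a⊗a)·F. Then for every universal R-matrix R on H one has G⁻¹ · (g⊗g)(R) · τ(G) = F⁻¹ · (f⊗f)(R) · τ(F); i.e. gauge equivalent twisted automorphisms act equally on universal R-matrices. -/
open scoped TensorProduct

noncomputable section

variable (K H : Type*) [Field K] [Ring H] [Bialgebra K H]

/-- For `S = Σ aᵢ⊗bᵢ ∈ H ⊗ H`, the element `S₁₂ = Σ aᵢ⊗bᵢ⊗1` of `H ⊗ (H ⊗ H)`. -/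
def s12 (S : H ⊗[K] H) : H ⊗[K] (H ⊗[K] H) :=
  TensorProduct.assoc K H H H (S ⊗ₜ[K] (1 : H))

/-- For `S = Σ aᵢ⊗bᵢ ∈ H ⊗ H`, the element `S₂₃ = Σ 1⊗aᵢ⊗bᵢ` of `H ⊗ (H ⊗ H)`. -/
def s23 (S : H ⊗[K] H) : H ⊗[K] (H ⊗[K] H) := (1 : H) ⊗ₜ[K] S

/-- For `S = Σ aᵢ⊗bᵢ ∈ H ⊗ H`, the element `S₁₃ = Σ aᵢ⊗1⊗bᵢ` of `H ⊗ (H ⊗ H)`. -/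
def s13 (S : H ⊗[K] H) : H ⊗[K] (H ⊗[K] H) :=
  LinearMap.lTensor H (TensorProduct.comm K H H).toLinearMap (s12 K H S)

/-- A universal R-matrix on the bialgebra `H`: an invertible `R ∈ H ⊗ H` such that
`R·τ(Δ(x)) = Δ(x)·R` for all `x`, `(I⊗Δ)(R) = R₂₃R₁₃` and `(Δ⊗I)(R) = R₁₂R₁₃`. -/
structure IsRMatrix (R : H ⊗[K] H) : Prop where
  isUnit : IsUnit R
  conj : ∀ x : H, R * TensorProduct.comm K H H (cm K H x) = cm K H x * R
  hexagon_left : LinearMap.lTensor H (cm K H) R = s23 K H R * s13 K H R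
  hexagon_right :
    TensorProduct.assoc K H H H (LinearMap.rTensor H (cm K H) R) = s12 K H R * s13 K H R

/-- If `a` is an invertible gauge transformation from the twisted
automorphism `(f,F)` to the twisted automorphism `(g,G)`, then for every universal
R-matrix `R` on `H` one has `G⁻¹·(g⊗g)(R)·τ(G) = F⁻¹·(f⊗f)(R)·τ(F)`:
gauge equivalent twisted automorphisms act equally on universal R-matrices. -/
theorem gauge_acts_equally (f g : H ≃ₐ[K] H) (F G : H ⊗[K] H)
    (hF : IsTwistedAut K H f F) (hG : IsTwistedAut K H g G)
    (a : H) (haU : IsUnit a)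
    (hcomm : ∀ x : H, a * f x = g x * a)
    (hmon : G * cm K H a = (a ⊗ₜ[K] a) * F)
    (R : H ⊗[K] H) (hR : IsRMatrix K H R) :
    Ring.inverse G * Algebra.TensorProduct.map g.toAlgHom g.toAlgHom R *
        TensorProduct.comm K H H G
      = Ring.inverse F * Algebra.TensorProduct.map f.toAlgHom f.toAlgHom R *
        TensorProduct.comm K H H F := by
  classical
  set τ := fun x : H ⊗[K] H => TensorProduct.comm K H H x with hτ
  set φ := Algebra.TensorProduct.map f.toAlgHom f.toAlgHom with hφ
  set ψ := Algebra.TensorProduct.map g.toAlgHom g.toAlgHom with hψ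
  set u : H ⊗[K] H := a ⊗ₜ[K] a with hu
  set D : H ⊗[K] H := cm K H a with hD
  -- τ is multiplicative
  have tau_mul : ∀ x y : H ⊗[K] H, τ (x * y) = τ x * τ y := by
    intro x y
    have : (TensorProduct.comm K H H : H ⊗[K] H → H ⊗[K] H)
        = (Algebra.TensorProduct.comm K H H : H ⊗[K] H → H ⊗[K] H) := rfl
    simp only [hτ, this]
    exact map_mul _ x y
  -- τ commutes with φ
  have tau_phi : ∀ S : H ⊗[K] H, τ (φ S) = φ (τ S) := by
    intro S
    induction S using TensorProduct.induction_on with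
    | zero => simp [hτ, hφ]
    | tmul p q => simp [hτ, hφ]
    | add x y hx hy => simp only [hτ, hφ, map_add] at hx hy ⊢; rw [hx, hy]
  -- conjugation by a ⊗ a
  have key1 : ∀ S : H ⊗[K] H, ψ S * u = u * φ S := by
    intro S
    induction S using TensorProduct.induction_on with
    | zero => simp
    | tmul p q =>
        simp only [hψ, hφ, hu, Algebra.TensorProduct.map_tmul,
          Algebra.TensorProduct.tmul_mul_tmul, AlgEquiv.toAlgHom_eq_coe,
          AlgHom.coe_coe, ← hcomm]
        exact congrArg₂ _ (hcomm p).symm (hcomm q).symm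
    | add x y hx hy => simp only [map_add, add_mul, mul_add, hx, hy]
  have huU : IsUnit u := by
    have h : u = (a ⊗ₜ[K] (1:H)) * ((1:H) ⊗ₜ[K] a) := by
      simp [hu, Algebra.TensorProduct.tmul_mul_tmul]
    rw [h]
    exact (haU.map (Algebra.TensorProduct.includeLeft : H →ₐ[K] H ⊗[K] H)).mul
      (haU.map (Algebra.TensorProduct.includeRight : H →ₐ[K] H ⊗[K] H))
  have hDU : IsUnit D := by
    have h : D = ↑hG.isUnit.unit⁻¹ * (u * F) := by
      rw [← hmon, ← mul_assoc, IsUnit.val_inv_mul, one_mul]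
    rw [h]
    exact (hG.isUnit.unit⁻¹).isUnit.mul (huU.mul hF.isUnit)
  have hTU : IsUnit (τ D) := hDU.map (Algebra.TensorProduct.comm K H H)
  -- τ of the gauge condition
  have key3 : τ G * τ D = u * τ F := by
    have h2 : τ u = u := by simp [hτ, hu]
    rw [← tau_mul, hmon, tau_mul, h2]
  -- F⁻¹ conjugation
  have finv_phi : ∀ x : H,
      Ring.inverse F * φ (cm K H x) = cm K H (f x) * Ring.inverse F := by
    intro x
    have h := hF.conj x
    calc Ring.inverse F * φ (cm K H x)
        = Ring.inverse F * (φ (cm K H x) * F) * Ring.inverse F := by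
          rw [mul_assoc, mul_assoc, Ring.mul_inverse_cancel _ hF.isUnit, mul_one]
      _ = Ring.inverse F * (F * cm K H (f x)) * Ring.inverse F := by rw [← h]
      _ = cm K H (f x) * Ring.inverse F := by
          rw [← mul_assoc, Ring.inverse_mul_cancel _ hF.isUnit, one_mul]
  -- the twisted R-matrix intertwines comultiplications
  have key4 : ∀ x : H,
      (Ring.inverse F * φ R * τ F) * τ (cm K H (f x))
        = cm K H (f x) * (Ring.inverse F * φ R * τ F) := by
    intro x
    calc (Ring.inverse F * φ R * τ F) * τ (cm K H (f x))
        = Ring.inverse F * φ R * (τ F * τ (cm K H (f x))) := by rw [mul_assoc]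
      _ = Ring.inverse F * φ R * τ (F * cm K H (f x)) := by rw [← tau_mul]
      _ = Ring.inverse F * φ R * τ (φ (cm K H x) * F) := by rw [hF.conj x]
      _ = Ring.inverse F * φ R * (φ (τ (cm K H x)) * τ F) := by
          rw [tau_mul, tau_phi]
      _ = Ring.inverse F * (φ R * φ (τ (cm K H x))) * τ F := by
          rw [mul_assoc, mul_assoc, mul_assoc]
      _ = Ring.inverse F * φ (R * τ (cm K H x)) * τ F := by rw [map_mul]
      _ = Ring.inverse F * φ (cm K H x * R) * τ F := by
          rw [show R * τ (cm K H x) = cm K H x * R from hR.conj x]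
      _ = Ring.inverse F * (φ (cm K H x) * φ R) * τ F := by rw [map_mul]
      _ = (Ring.inverse F * φ (cm K H x)) * φ R * τ F := by rw [← mul_assoc]
      _ = cm K H (f x) * Ring.inverse F * φ R * τ F := by rw [finv_phi x]
      _ = cm K H (f x) * (Ring.inverse F * φ R * τ F) := by
          rw [mul_assoc, mul_assoc, mul_assoc]
  have key4a : (Ring.inverse F * φ R * τ F) * τ D = D * (Ring.inverse F * φ R * τ F) := by
    have h := key4 (f.symm a)
    rwa [f.apply_symm_apply] at h
  have L1 : G * (Ring.inverse G * ψ R * τ G) * τ D = u * φ R * τ F := by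
    calc G * (Ring.inverse G * ψ R * τ G) * τ D
        = ψ R * τ G * τ D := by
          rw [← mul_assoc, ← mul_assoc, Ring.mul_inverse_cancel _ hG.isUnit, one_mul]
      _ = ψ R * (u * τ F) := by rw [mul_assoc, key3]
      _ = u * φ R * τ F := by rw [← mul_assoc, key1 R, mul_assoc, ← mul_assoc]
  have L2 : G * (Ring.inverse F * φ R * τ F) * τ D = u * φ R * τ F := by
    calc G * (Ring.inverse F * φ R * τ F) * τ D
        = G * ((Ring.inverse F * φ R * τ F) * τ D) := by rw [mul_assoc]
      _ = G * (D * (Ring.inverse F * φ R * τ F)) := by rw [key4a]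
      _ = (G * D) * (Ring.inverse F * φ R * τ F) := by rw [← mul_assoc]
      _ = u * (F * (Ring.inverse F * φ R * τ F)) := by rw [hmon, mul_assoc]
      _ = u * (φ R * τ F) := by
          have hFY : F * (Ring.inverse F * φ R * τ F) = φ R * τ F := by
            rw [← mul_assoc, ← mul_assoc, Ring.mul_inverse_cancel _ hF.isUnit, one_mul]
          rw [hFY]
      _ = u * φ R * τ F := by rw [← mul_assoc]
  exact hG.isUnit.mul_right_injective (hTU.mul_left_injective (L1.trans L2.symm))

end
end

section
/- Let H be a bialgebra over a field k and r ∈ H⊗H an element satisfying (I⊗Δ)(r) = r₁₂ + r₁₃ and (Δ⊗I)(r) = r₁₃ + r₂₃. Then r lies in the image of Prim(H)⊗Prim(H) in H⊗H, where Prim(H) = {x ∈ H : Δ(x) = x⊗1 + 1⊗x} is the subspace of primitive elements. -/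
open scoped TensorProduct

noncomputable section

variable (K H : Type*) [Field K] [Ring H] [Bialgebra K H]

/-- The subspace of primitive elements `Prim(H) = {x | Δ(x) = x⊗1 + 1⊗x}`,
as the kernel of the linear map `x ↦ Δ(x) − (x⊗1 + 1⊗x)`. -/
def primitives : Submodule K H :=
  LinearMap.ker (cm K H - ((TensorProduct.mk K H H).flip (1 : H) + TensorProduct.mk K H H 1))

/-- If `r ∈ H ⊗ H` satisfies the classical triangle equations
`(I⊗Δ)(r) = r₁₂ + r₁₃` and `(Δ⊗I)(r) = r₁₃ + r₂₃`, then `r` lies in the image of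
`Prim(H) ⊗ Prim(H)` in `H ⊗ H`. -/
theorem classical_rmatrix_primitive (r : H ⊗[K] H)
    (h1 : LinearMap.lTensor H (cm K H) r = s12 K H r + s13 K H r)
    (h2 : TensorProduct.assoc K H H H (LinearMap.rTensor H (cm K H) r)
      = s13 K H r + s23 K H r) :
    r ∈ LinearMap.range
      (TensorProduct.map (primitives K H).subtype (primitives K H).subtype) := by
  set f : H →ₗ[K] H ⊗[K] H :=
    cm K H - ((TensorProduct.mk K H H).flip (1 : H) + TensorProduct.mk K H H 1) with hf
  -- auxiliary identifications
  have e12 : ∀ s : H ⊗[K] H,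
      LinearMap.lTensor H ((TensorProduct.mk K H H).flip (1 : H)) s = s12 K H s := by
    intro s
    induction s using TensorProduct.induction_on with
    | zero => simp only [LinearMap.map_zero, s12, TensorProduct.zero_tmul, LinearEquiv.map_zero]
    | tmul a b => simp [s12]
    | add x y hx hy => simp only [map_add, hx, hy, s12, TensorProduct.add_tmul]
  have e13 : ∀ s : H ⊗[K] H,
      LinearMap.lTensor H (TensorProduct.mk K H H 1) s = s13 K H s := by
    intro s
    induction s using TensorProduct.induction_on with
    | zero => simp only [LinearMap.map_zero, s13, s12, TensorProduct.zero_tmul, LinearEquiv.map_zero]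
    | tmul a b => simp [s13, s12]
    | add x y hx hy => simp only [map_add, hx, hy, s13, s12, TensorProduct.add_tmul]
  have e13' : ∀ s : H ⊗[K] H,
      TensorProduct.assoc K H H H
        (LinearMap.rTensor H ((TensorProduct.mk K H H).flip (1 : H)) s) = s13 K H s := by
    intro s
    induction s using TensorProduct.induction_on with
    | zero => simp only [LinearMap.map_zero, s13, s12, TensorProduct.zero_tmul, LinearEquiv.map_zero]
    | tmul a b => simp [s13, s12]
    | add x y hx hy => simp only [map_add, hx, hy, s13, s12, TensorProduct.add_tmul]
  have e23 : ∀ s : H ⊗[K] H,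
      TensorProduct.assoc K H H H
        (LinearMap.rTensor H (TensorProduct.mk K H H 1) s) = s23 K H s := by
    intro s
    induction s using TensorProduct.induction_on with
    | zero => simp only [LinearMap.map_zero, s23, TensorProduct.tmul_zero, LinearEquiv.map_zero]
    | tmul a b => simp [s23]
    | add x y hx hy =>
        simp only [map_add, hx, hy, s23]
        rw [TensorProduct.tmul_add]
  -- r is killed by lTensor f and rTensor f
  have k1 : LinearMap.lTensor H f r = 0 := by
    rw [hf, LinearMap.lTensor_sub, LinearMap.lTensor_add]
    simp only [LinearMap.sub_apply, LinearMap.add_apply, h1, e12 r, e13 r]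
    abel
  have k2 : LinearMap.rTensor H f r = 0 := by
    apply (TensorProduct.assoc K H H H).injective
    rw [hf, LinearMap.rTensor_sub, LinearMap.rTensor_add]
    rw [LinearMap.sub_apply, LinearMap.add_apply, map_sub, map_add, h2, e13' r, e23 r,
      LinearEquiv.map_zero]
    abel
  -- hence r comes from H ⊗ P and from P ⊗ H
  have hker : primitives K H = LinearMap.ker f := rfl
  obtain ⟨s, hs⟩ :
      r ∈ Set.range (LinearMap.lTensor H (primitives K H).subtype) := by
    rw [hker]
    exact (Module.Flat.lTensor_exact H (LinearMap.exact_subtype_ker_map f) r).mp k1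
  obtain ⟨t, ht⟩ :
      r ∈ Set.range (LinearMap.rTensor H (primitives K H).subtype) := by
    rw [hker]
    exact (Module.Flat.rTensor_exact H (LinearMap.exact_subtype_ker_map f) r).mp k2
  -- projection onto primitives
  obtain ⟨Q, hQ⟩ := (primitives K H).exists_isCompl
  set q : H →ₗ[K] primitives K H := (primitives K H).projectionOnto Q hQ with hq
  set p : H →ₗ[K] H := (primitives K H).subtype ∘ₗ q with hp
  have hpsub : p ∘ₗ (primitives K H).subtype = (primitives K H).subtype := by
    ext x
    simp [hp, hq, Submodule.projectionOnto_apply_left hQ]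
  have hrT : LinearMap.rTensor H p r = r := by
    rw [← ht, ← LinearMap.comp_apply, ← LinearMap.rTensor_comp, hpsub]
  have hlT : LinearMap.lTensor H p r = r := by
    rw [← hs, ← LinearMap.comp_apply, ← LinearMap.lTensor_comp, hpsub]
  refine ⟨TensorProduct.map q q r, ?_⟩
  rw [← LinearMap.comp_apply, ← TensorProduct.map_comp, ← hp,
    ← LinearMap.lTensor_comp_rTensor, LinearMap.comp_apply, hrT, hlT]

end
end

section
/- Let H be a cocommutative bialgebra over a field k of characteristic different from 2 (cocommutative means τ∘Δ = Δ), and let (d,φ) be a twisted derivation of H with τ(φ) = −φ. Then d is a bialgebra derivation, i.e. Δ(d(x)) = (d⊗I + I⊗d)(Δ(x)) for all x ∈ H, and [φ, Δ(x)] = 0 for all x ∈ H; i.e. (d,φ) is separated. -/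
open scoped TensorProduct

noncomputable section

variable (K H : Type*) [Field K] [Ring H] [Bialgebra K H]

private lemma comm_mul' (z w : H ⊗[K] H) :
    TensorProduct.comm K H H (z * w)
      = TensorProduct.comm K H H z * TensorProduct.comm K H H w := by
  induction z using TensorProduct.induction_on with
  | zero => simp
  | tmul a b =>
    induction w using TensorProduct.induction_on with
    | zero => simp
    | tmul c e => simp [Algebra.TensorProduct.tmul_mul_tmul]
    | add u v hu hv => simp only [mul_add, map_add, hu, hv]
  | add u v hu hv => simp only [add_mul, map_add, hu, hv]

private lemma comm_rTensor' (f : H →ₗ[K] H) (z : H ⊗[K] H) :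
    TensorProduct.comm K H H (LinearMap.rTensor H f z)
      = LinearMap.lTensor H f (TensorProduct.comm K H H z) := by
  induction z using TensorProduct.induction_on with
  | zero => simp
  | tmul a b => simp
  | add u v hu hv => simp only [map_add, hu, hv]

private lemma comm_lTensor' (f : H →ₗ[K] H) (z : H ⊗[K] H) :
    TensorProduct.comm K H H (LinearMap.lTensor H f z)
      = LinearMap.rTensor H f (TensorProduct.comm K H H z) := by
  induction z using TensorProduct.induction_on with
  | zero => simp
  | tmul a b => simp
  | add u v hu hv => simp only [map_add, hu, hv]

/-- Let `H` be a cocommutative bialgebra over a field of characteristic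
different from 2, and let `(d,φ)` be a twisted derivation of `H` with `τ(φ) = −φ`.
Then `d` is a bialgebra derivation and `[φ, Δ(x)] = 0` for all `x`, i.e. `(d,φ)` is
separated. -/
theorem cocommutative_antisymmetric_separated (hchar : (2 : K) ≠ 0)
    (hcoc : ∀ x : H, TensorProduct.comm K H H (cm K H x) = cm K H x)
    (d : H →ₗ[K] H) (φ : H ⊗[K] H) (h : IsTwistedDerivation K H d φ)
    (hanti : TensorProduct.comm K H H φ = -φ) :
    (∀ x : H, cm K H (d x) = (LinearMap.rTensor H d + LinearMap.lTensor H d) (cm K H x)) ∧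
    (∀ x : H, φ * cm K H x = cm K H x * φ) := by
  have key : ∀ x : H, φ * cm K H x - cm K H x * φ = 0 := by
    intro x
    set c := φ * cm K H x - cm K H x * φ with hc
    have h1 := h.conj x
    have h2 : TensorProduct.comm K H H
        ((LinearMap.rTensor H d + LinearMap.lTensor H d) (cm K H x) - cm K H (d x))
        = (LinearMap.rTensor H d + LinearMap.lTensor H d) (cm K H x) - cm K H (d x) := by
      rw [map_sub, hcoc (d x), LinearMap.add_apply, map_add, comm_rTensor', comm_lTensor',
        hcoc x]
      abel
    have h3 : TensorProduct.comm K H H c = -c := by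
      rw [hc, map_sub, comm_mul', comm_mul', hanti, hcoc x, neg_mul, mul_neg]
      abel
    have hcc : c = -c := by
      have e1 : TensorProduct.comm K H H
          ((LinearMap.rTensor H d + LinearMap.lTensor H d) (cm K H x) - cm K H (d x)) = c := by
        rw [h2, h1]
      have e2 : TensorProduct.comm K H H
          ((LinearMap.rTensor H d + LinearMap.lTensor H d) (cm K H x) - cm K H (d x)) = -c := by
        rw [h1]; exact h3
      exact e1.symm.trans e2
    have h2c : (2 : K) • c = 0 := by
      rw [two_smul]
      nth_rewrite 1 [hcc]
      rw [neg_add_cancel]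
    rcases smul_eq_zero.mp h2c with h | h
    · exact absurd h hchar
    · exact h
  constructor
  · intro x
    have := h.conj x
    rw [key x] at this
    exact (sub_eq_zero.mp this).symm
  · intro x
    exact sub_eq_zero.mp (key x)


end
end

section
/- Let H be a bialgebra over a field k, let g₁, g₂ ∈ H be group-like elements (Δ(gᵢ) = gᵢ⊗gᵢ, ε(gᵢ) = 1) with g₁g₂ = 1, and let x₁, x₂ ∈ H satisfy Δ(xᵢ) = 1⊗xᵢ + xᵢ⊗gᵢ for i = 1,2 (i.e. xᵢ is gᵢ-primitive). Then the element F = x₁ ⊗ g₁x₂ ∈ H⊗H is a co-Hochschild 2-cocycle: 1⊗F + (I⊗Δ)(F) = F⊗1 + (Δ⊗I)(F). -/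
open scoped TensorProduct

noncomputable section

variable (K H : Type*) [Field K] [Ring H] [Bialgebra K H]

/-- Let `g₁, g₂` be group-like elements of `H` with `g₁g₂ = 1` and let
`xᵢ` be `gᵢ`-primitive (`Δ(xᵢ) = 1⊗xᵢ + xᵢ⊗gᵢ`) for `i = 1,2`.  Then
`F = x₁ ⊗ g₁x₂` is a co-Hochschild 2-cocycle:
`1⊗F + (I⊗Δ)(F) = F⊗1 + (Δ⊗I)(F)`. -/
theorem relative_primitive_cocycle (g1 g2 x1 x2 : H)
    (hg1 : cm K H g1 = g1 ⊗ₜ[K] g1) (hg1c : cu K H g1 = 1)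
    (hg2 : cm K H g2 = g2 ⊗ₜ[K] g2) (hg2c : cu K H g2 = 1)
    (hg : g1 * g2 = 1)
    (hx1 : cm K H x1 = (1 : H) ⊗ₜ[K] x1 + x1 ⊗ₜ[K] g1)
    (hx2 : cm K H x2 = (1 : H) ⊗ₜ[K] x2 + x2 ⊗ₜ[K] g2) :
    (1 : H) ⊗ₜ[K] (x1 ⊗ₜ[K] (g1 * x2))
        + LinearMap.lTensor H (cm K H) (x1 ⊗ₜ[K] (g1 * x2))
      = TensorProduct.assoc K H H H ((x1 ⊗ₜ[K] (g1 * x2)) ⊗ₜ[K] (1 : H)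
        + LinearMap.rTensor H (cm K H) (x1 ⊗ₜ[K] (g1 * x2))) := by
  have hmul : cm K H (g1 * x2) = g1 ⊗ₜ[K] (g1 * x2) + (g1 * x2) ⊗ₜ[K] (1 : H) := by
    have : cm K H (g1 * x2) = cm K H g1 * cm K H x2 := Bialgebra.comul_mul g1 x2
    rw [this, hg1, hx2]
    rw [mul_add, Algebra.TensorProduct.tmul_mul_tmul, Algebra.TensorProduct.tmul_mul_tmul,
      mul_one, hg]
  simp only [LinearMap.lTensor_tmul, LinearMap.rTensor_tmul]
  rw [hmul, hx1]
  simp only [map_add, TensorProduct.tmul_add, TensorProduct.add_tmul,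
    TensorProduct.assoc_tmul]
  abel

end
end

section
/- Let G be a group and k a field, and let H = k[G] be the group bialgebra, with Δ(g) = g⊗g and ε(g) = 1 for g ∈ G. Then every co-Hochschild 2-cocycle on H is a coboundary: if φ ∈ H⊗H satisfies 1⊗φ + (I⊗Δ)(φ) = φ⊗1 + (Δ⊗I)(φ), then there exists a ∈ H such that φ = a⊗1 + 1⊗a − Δ(a). -/
open scoped TensorProduct

noncomputable section

variable (K G : Type*) [Field K] [Group G]

local notation "H" => MonoidAlgebra K G

section Aux
variable {K G}
open TensorProduct LinearMap

def gcoeff (g : G) : H →ₗ[K] K :=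
  Finsupp.lapply g ∘ₗ (MonoidAlgebra.coeffLinearEquiv K).toLinearMap

def gcoeff₂ (g h : G) : (H ⊗[K] H) →ₗ[K] K :=
  (TensorProduct.lid K K).toLinearMap ∘ₗ TensorProduct.map (gcoeff g) (gcoeff h)

omit [Group G] in
lemma gcoeff₂_tmul (g h : G) (x y : H) :
    gcoeff₂ g h (x ⊗ₜ[K] y) = gcoeff g x * gcoeff h y := by
  simp [gcoeff₂, smul_eq_mul]

omit [Group G] in
open Classical in
lemma gcoeff_single (g b : G) (r : K) :
    gcoeff g (MonoidAlgebra.single b r) = if b = g then r else 0 := by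
  classical
  show (Finsupp.single b r : G →₀ K) g = if b = g then r else 0
  simp [Finsupp.single_apply]

open Classical in
lemma gcoeff_of (g b : G) :
    gcoeff g (MonoidAlgebra.of K G b) = if b = g then 1 else 0 := by
  rw [MonoidAlgebra.of_apply]; exact gcoeff_single g b 1

open Classical in
lemma gcoeff_one (g : G) : gcoeff g (1 : H) = if (1 : G) = g then 1 else 0 := by
  rw [MonoidAlgebra.one_def]; exact gcoeff_single g 1 1

omit [Group G] in
lemma gcoeff₂_injective (x y : H ⊗[K] H)
    (h : ∀ g h' : G, gcoeff₂ g h' x = gcoeff₂ g h' y) : x = y := by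
  apply ((TensorProduct.congr (MonoidAlgebra.coeffLinearEquiv K) (MonoidAlgebra.coeffLinearEquiv K)) ≪≫ₗ finsuppTensorFinsupp' K G G).injective
  ext ⟨g, h'⟩
  have key : ∀ z : H ⊗[K] H, ((TensorProduct.congr (MonoidAlgebra.coeffLinearEquiv K) (MonoidAlgebra.coeffLinearEquiv K)) ≪≫ₗ finsuppTensorFinsupp' K G G) z (g, h') = gcoeff₂ g h' z := by
    intro z
    induction z using TensorProduct.induction_on with
    | zero =>
        rw [(((TensorProduct.congr (MonoidAlgebra.coeffLinearEquiv K) (MonoidAlgebra.coeffLinearEquiv K)) ≪≫ₗ finsuppTensorFinsupp' K G G)).map_zero, map_zero]; rfl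
    | tmul a b =>
        rw [gcoeff₂_tmul, LinearEquiv.trans_apply, TensorProduct.congr_tmul,
          finsuppTensorFinsupp'_apply_apply]; rfl
    | add a b ha hb =>
        rw [(((TensorProduct.congr (MonoidAlgebra.coeffLinearEquiv K) (MonoidAlgebra.coeffLinearEquiv K)) ≪≫ₗ finsuppTensorFinsupp' K G G)).map_add, map_add, Finsupp.add_apply, ha, hb]
  rw [key, key]; exact h g h'

end Aux

/-- Let `H = k[G]` be the group bialgebra of a group `G`, i.e. the
group algebra equipped with the (unique) bialgebra structure whose comultiplication
`Δ` and counit `ε` satisfy `Δ(g) = g⊗g` and `ε(g) = 1` for `g ∈ G`.  Then every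
co-Hochschild 2-cocycle on `H` is a coboundary: if `φ ∈ H ⊗ H` satisfies
`1⊗φ + (I⊗Δ)(φ) = φ⊗1 + (Δ⊗I)(φ)` then `φ = a⊗1 + 1⊗a − Δ(a)` for some `a ∈ H`. -/
theorem groupAlgebra_two_cocycle_is_coboundary
    (Δ' : H →ₐ[K] H ⊗[K] H)
    (hΔ' : ∀ g : G, Δ' (MonoidAlgebra.of K G g)
      = MonoidAlgebra.of K G g ⊗ₜ[K] MonoidAlgebra.of K G g)
    (ε' : H →ₐ[K] K) (hε' : ∀ g : G, ε' (MonoidAlgebra.of K G g) = 1)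
    (φ : H ⊗[K] H)
    (hφ : (1 : H) ⊗ₜ[K] φ + LinearMap.lTensor H Δ'.toLinearMap φ
      = TensorProduct.assoc K H H H (φ ⊗ₜ[K] (1 : H) + LinearMap.rTensor H Δ'.toLinearMap φ)) :
    ∃ a : H, φ = a ⊗ₜ[K] (1 : H) + (1 : H) ⊗ₜ[K] a - Δ' a := by
  classical
  -- coefficient of Δ'
  have hcoeffΔ : ∀ g h : G, (gcoeff₂ g h).comp Δ'.toLinearMap
      = if g = h then (gcoeff g : H →ₗ[K] K) else 0 := by
    intro g h
    apply MonoidAlgebra.lhom_ext' (fun b => ?_)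
    apply LinearMap.ext_ring
    have hb1 : (MonoidAlgebra.lsingle (R := K) b) (1 : K) = MonoidAlgebra.of K G b := by
      simp [MonoidAlgebra.of_apply]
    simp only [LinearMap.comp_apply, hb1]
    rw [AlgHom.toLinearMap_apply, hΔ', gcoeff₂_tmul, gcoeff_of, gcoeff_of]
    by_cases hgh : g = h
    · subst hgh
      simp only [if_pos rfl, gcoeff_of]
      by_cases hb : b = g <;> simp [hb, gcoeff_single]
    · simp only [if_neg hgh, LinearMap.zero_apply]
      by_cases hbg : b = g
      · subst hbg
        have : ¬ (b = h) := fun hh => hgh (hh ▸ rfl)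
        simp [this]
      · simp [hbg]
  -- triple coefficient on H ⊗ (H ⊗ H)
  set coeff₃ : G → G → G → (H ⊗[K] (H ⊗[K] H)) →ₗ[K] K := fun g₁ g₂ g₃ =>
    (TensorProduct.lid K K).toLinearMap ∘ₗ TensorProduct.map (gcoeff g₁) (gcoeff₂ g₂ g₃)
    with hc3def
  have coeff₃_tmul : ∀ (g₁ g₂ g₃ : G) (x : H) (y : H ⊗[K] H),
      coeff₃ g₁ g₂ g₃ (x ⊗ₜ[K] y) = gcoeff g₁ x * gcoeff₂ g₂ g₃ y := by
    intro g₁ g₂ g₃ x y; simp [hc3def, smul_eq_mul]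
  set c : G → G → K := fun g h => gcoeff₂ g h φ with hcdef
  -- key relation (apply coeff₃ 1 g h to hφ)
  have key : ∀ g h : G, c g h + (if g = h then c 1 g else 0)
      = c 1 g * (if (1:G) = h then 1 else 0) + (if (1:G) = g then c 1 h else 0) := by
    intro g h
    have hmain := congrArg (coeff₃ 1 g h) hφ
    rw [map_add] at hmain
    -- LHS terms
    have l1 : coeff₃ 1 g h ((1 : H) ⊗ₜ[K] φ) = c g h := by
      rw [coeff₃_tmul, gcoeff_one]; simp [hcdef]
    have l2 : coeff₃ 1 g h (LinearMap.lTensor H Δ'.toLinearMap φ)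
        = if g = h then c 1 g else 0 := by
      have hcomp : (coeff₃ 1 g h).comp (LinearMap.lTensor H Δ'.toLinearMap)
          = if g = h then gcoeff₂ 1 g else 0 := by
        apply TensorProduct.ext'
        intro x y
        simp only [LinearMap.comp_apply, LinearMap.lTensor_tmul, coeff₃_tmul]
        rw [show gcoeff₂ g h (Δ'.toLinearMap y) = ((gcoeff₂ g h).comp Δ'.toLinearMap) y from rfl,
          hcoeffΔ]
        by_cases hgh : g = h <;> simp [hgh, gcoeff₂_tmul, mul_comm]
      calc coeff₃ 1 g h (LinearMap.lTensor H Δ'.toLinearMap φ)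
          = ((coeff₃ 1 g h).comp (LinearMap.lTensor H Δ'.toLinearMap)) φ := rfl
        _ = _ := by rw [hcomp]; by_cases hgh : g = h <;> simp [hgh, hcdef]
    -- RHS terms
    set F : ((H ⊗[K] H) ⊗[K] H) →ₗ[K] K :=
      (TensorProduct.lid K K).toLinearMap ∘ₗ TensorProduct.map (gcoeff₂ 1 g) (gcoeff h)
      with hFdef
    have hassoc : ∀ z : (H ⊗[K] H) ⊗[K] H,
        coeff₃ 1 g h (TensorProduct.assoc K H H H z) = F z := by
      intro z
      have hcomp : (coeff₃ 1 g h).comp (TensorProduct.assoc K H H H).toLinearMap = F := by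
        apply TensorProduct.ext_threefold
        intro x y w
        simp [hFdef, coeff₃_tmul, gcoeff₂_tmul, smul_eq_mul, mul_assoc]
      exact LinearMap.congr_fun hcomp z
    have r1 : F (φ ⊗ₜ[K] (1 : H)) = c 1 g * (if (1:G) = h then 1 else 0) := by
      simp [hFdef, smul_eq_mul, hcdef, gcoeff_one]
    have r2 : F (LinearMap.rTensor H Δ'.toLinearMap φ) = if (1:G) = g then c 1 h else 0 := by
      have hcomp : F.comp (LinearMap.rTensor H Δ'.toLinearMap)
          = if (1:G) = g then gcoeff₂ 1 h else 0 := by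
        apply TensorProduct.ext'
        intro x y
        simp only [hFdef, LinearMap.comp_apply, LinearMap.rTensor_tmul,
          TensorProduct.map_tmul, LinearEquiv.coe_coe, TensorProduct.lid_tmul, smul_eq_mul]
        rw [show gcoeff₂ 1 g (Δ'.toLinearMap x) = ((gcoeff₂ 1 g).comp Δ'.toLinearMap) x from rfl,
          hcoeffΔ]
        by_cases h1g : (1:G) = g <;> simp [h1g, gcoeff₂_tmul]
      calc F (LinearMap.rTensor H Δ'.toLinearMap φ)
          = (F.comp (LinearMap.rTensor H Δ'.toLinearMap)) φ := rfl
        _ = _ := by rw [hcomp]; by_cases h1g : (1:G) = g <;> simp [h1g, hcdef]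
    rw [l1, l2, (TensorProduct.assoc K H H H).map_add, map_add, hassoc, hassoc, r1, r2] at hmain
    exact hmain
  -- define a
  set a : H := TensorProduct.lid K H (LinearMap.rTensor H (gcoeff (1:G)) φ) with hadef
  have hacoeff : ∀ h : G, gcoeff h a = c 1 h := by
    intro h
    have hcomp : (gcoeff h ∘ₗ (TensorProduct.lid K H).toLinearMap ∘ₗ
        LinearMap.rTensor H (gcoeff (1:G))) = gcoeff₂ 1 h := by
      apply TensorProduct.ext'
      intro x y
      simp [gcoeff₂_tmul, smul_eq_mul]
    have := LinearMap.congr_fun hcomp φ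
    simpa [hadef, hcdef] using this
  refine ⟨a, gcoeff₂_injective _ _ (fun g h => ?_)⟩
  have hΔa : gcoeff₂ g h (Δ' a) = if g = h then c 1 g else 0 := by
    have h1 := LinearMap.congr_fun (hcoeffΔ g h) a
    simp only [LinearMap.comp_apply] at h1
    by_cases hgh : g = h
    · subst hgh
      rw [if_pos rfl] at h1 ⊢
      exact h1.trans (hacoeff g)
    · rw [if_neg hgh] at h1 ⊢
      simpa using h1
  have hrhs : gcoeff₂ g h (a ⊗ₜ[K] (1 : H) + (1 : H) ⊗ₜ[K] a - Δ' a)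
      = c 1 g * (if (1:G) = h then 1 else 0) + (if (1:G) = g then 1 else 0) * c 1 h
        - (if g = h then c 1 g else 0) := by
    rw [map_sub, map_add, gcoeff₂_tmul, gcoeff₂_tmul, hacoeff, hacoeff, gcoeff_one, gcoeff_one,
      hΔa]
  rw [hrhs]
  have hmul : ((if (1:G) = g then (1:K) else 0) * c 1 h) = (if (1:G) = g then c 1 h else 0) := by
    by_cases h1g : (1:G) = g <;> simp [h1g]
  show c g h = _
  rw [hmul]
  linear_combination key g h

end
end
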